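/- arXiv:1505.05642 — 2 statements merged into one kernel-verified Lean document; each statement's English description precedes it below -/
import Mathlib

section
/- For every integer q ≥ 2, every unit α of Z_q, and every c ∈ S_2(q), the codeword (c, α, c + α·𝟏, c + 2α·𝟏, …, c + (q−1)α·𝟏) of the Z_q-Simplex code S_3(q) has Hamming weight 1 + (q − 1)(q + 1) = q^2; consequently the number of codewords of S_3(q) arising from pairs (α, c) with α a unit is exactly φ(q)·q^2, each of weight q^2, where φ is Euler's totient function. -/
/-- Hamming weight of a word over `ZMod q`: the number of nonzero coordinates. -/
def wt {q : ℕ} (l : List (ZMod q)) : ℕ := l.countP (fun x => decide (x ≠ 0))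

/-- The word `(c, α, c + α·𝟏, c + 2α·𝟏, …, c + (q−1)α·𝟏)`, where `𝟏` is the
all-ones vector of the same length as `c`. -/
def simplexWord (q : ℕ) (α : ZMod q) (c : List (ZMod q)) : List (ZMod q) :=
  c ++ α :: (List.range (q - 1)).flatMap (fun i => c.map (fun x => x + ((i + 1 : ℕ) : ZMod q) * α))

/-- The `ZMod q`-Simplex code `S_k(q)` of dimension `k`, as a set of words (lists):
`S_1(q) = ZMod q` (as length-1 words) and
`S_k(q) = {(c, α, c + α·𝟏, …, c + (q−1)α·𝟏) : c ∈ S_{k-1}(q), α ∈ ZMod q}`. -/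
def simplex (q : ℕ) : ℕ → Set (List (ZMod q))
  | 0 => {[]}
  | k + 1 => {w | ∃ c ∈ simplex q k, ∃ α : ZMod q, w = simplexWord q α c}

/-- The word `(α, c + α·𝟏, c + 2α·𝟏, …, c + (q−1)α·𝟏)`. -/
def macWord (q : ℕ) (α : ZMod q) (c : List (ZMod q)) : List (ZMod q) :=
  α :: (List.range (q - 1)).flatMap (fun i => c.map (fun x => x + ((i + 1 : ℕ) : ZMod q) * α))

/-- The `ZMod q`-MacDonald code `M_{k,k-1}(q)`, as a set of words:
`M_{k,k-1}(q) = {(α, c + α·𝟏, …, c + (q−1)α·𝟏) : α ∈ ZMod q, c ∈ S_{k-1}(q)}`. -/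
def macdonald (q k : ℕ) : Set (List (ZMod q)) :=
  {w | ∃ α : ZMod q, ∃ c ∈ simplex q (k - 1), w = macWord q α c}

section helpers

lemma countP_flatMap_range {X : Type*} (p : X → Bool) (f : ℕ → List X) (n : ℕ) :
    ((List.range n).flatMap f).countP p = ∑ i ∈ Finset.range n, (f i).countP p := by
  induction n with
  | zero => simp
  | succ n ih =>
      rw [List.range_succ, List.flatMap_append, List.countP_append, ih,
        Finset.sum_range_succ]
      simp

lemma length_flatMap_range {X : Type*} (f : ℕ → List X) (n : ℕ) :
    ((List.range n).flatMap f).length = ∑ i ∈ Finset.range n, (f i).length := by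
  induction n with
  | zero => simp
  | succ n ih =>
      rw [List.range_succ, List.flatMap_append, List.length_append, ih,
        Finset.sum_range_succ]
      simp

lemma countA (q : ℕ) (hq : 2 ≤ q) (α : ZMod q) (hα : IsUnit α) (x : ZMod q) :
    ∑ i ∈ Finset.range q, (if x + (i : ZMod q) * α ≠ 0 then 1 else 0) = q - 1 := by
  haveI : NeZero q := ⟨by omega⟩
  obtain ⟨u, rfl⟩ := hα
  set a : ZMod q := -x * ↑u⁻¹ with ha
  have key : ∀ i ∈ Finset.range q, (x + (i : ZMod q) * ↑u = 0) ↔ i = a.val := by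
    intro i hi
    rw [Finset.mem_range] at hi
    constructor
    · intro h
      have h2 : (i : ZMod q) * ↑u * ↑u⁻¹ = -x * ↑u⁻¹ := by
        rw [show (i : ZMod q) * ↑u = -x by linear_combination h]
      rw [mul_assoc, Units.mul_inv, mul_one] at h2
      rw [← ZMod.val_cast_of_lt hi, h2, ha]
    · intro h
      subst h
      have : ((a.val : ℕ) : ZMod q) = a := by
        rw [ZMod.natCast_val, ZMod.cast_id]
      rw [this, ha, mul_assoc, Units.inv_mul, mul_one]
      ring
  have hsplit : ∀ i : ℕ, (if x + (i : ZMod q) * ↑u ≠ 0 then (1:ℕ) else 0)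
      + (if x + (i : ZMod q) * ↑u = 0 then 1 else 0) = 1 := by
    intro i
    by_cases h : x + (i : ZMod q) * ↑u = 0 <;> simp [h]
  have hzero : ∑ i ∈ Finset.range q, (if x + (i : ZMod q) * ↑u = 0 then (1:ℕ) else 0) = 1 := by
    rw [Finset.sum_congr rfl (fun i hi => by rw [if_congr (key i hi) rfl rfl])]
    rw [Finset.sum_ite_eq' (Finset.range q) a.val (fun _ => (1:ℕ))]
    simp [ZMod.val_lt a]
  have htot : (∑ i ∈ Finset.range q, (if x + (i : ZMod q) * ↑u ≠ 0 then (1:ℕ) else 0))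
      + ∑ i ∈ Finset.range q, (if x + (i : ZMod q) * ↑u = 0 then (1:ℕ) else 0) = q := by
    rw [← Finset.sum_add_distrib]
    simp only [hsplit]
    simp
  omega

lemma perElem (q : ℕ) (hq : 2 ≤ q) (α : ZMod q) (hα : IsUnit α) (x : ZMod q) :
    (if x ≠ 0 then 1 else 0)
      + ∑ i ∈ Finset.range (q - 1), (if x + ((i + 1 : ℕ) : ZMod q) * α ≠ 0 then 1 else 0)
      = q - 1 := by
  have h := countA q hq α hα x
  have hq1 : Finset.range q = Finset.range ((q - 1) + 1) := by congr 1; omega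
  rw [hq1, Finset.sum_range_succ'] at h
  simp only [Nat.cast_zero, zero_mul, add_zero] at h
  omega

lemma wt_key (q : ℕ) (hq : 2 ≤ q) (α : ZMod q) (hα : IsUnit α) (c : List (ZMod q)) :
    wt c + ∑ i ∈ Finset.range (q - 1),
      (c.map (fun x => x + ((i + 1 : ℕ) : ZMod q) * α)).countP (fun x => decide (x ≠ 0))
      = c.length * (q - 1) := by
  induction c with
  | nil => simp [wt]
  | cons y l ih =>
      simp only [wt, List.countP_cons, List.map_cons, List.length_cons] at *
      rw [Finset.sum_add_distrib]
      have hp := perElem q hq α hα y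
      simp only [decide_eq_true_eq] at *
      have : (l.length + 1) * (q - 1) = l.length * (q - 1) + (q - 1) := by ring
      omega

lemma mem_simplex_two (q : ℕ) (c : List (ZMod q)) (hc : c ∈ simplex q 2) :
    ∃ γ β : ZMod q, c = simplexWord q β [γ] := by
  obtain ⟨c1, hc1, β, rfl⟩ := hc
  obtain ⟨c0, hc0, γ, rfl⟩ := hc1
  have : c0 = [] := hc0
  subst this
  refine ⟨γ, β, ?_⟩
  congr 1
  simp [simplexWord]

lemma simplexWord_inner (q : ℕ) (β γ : ZMod q) :
    simplexWord q β [γ] = γ :: β ::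
      (List.range (q - 1)).flatMap (fun i => [γ + ((i + 1 : ℕ) : ZMod q) * β]) := by
  simp [simplexWord]

lemma length_simplex_two (q : ℕ) (hq : 2 ≤ q) (β γ : ZMod q) :
    (simplexWord q β [γ]).length = q + 1 := by
  rw [simplexWord_inner, List.length_cons, List.length_cons, length_flatMap_range]
  simp
  omega

end helpers

lemma simplexWord_nil (q : ℕ) (γ : ZMod q) : simplexWord q γ [] = [γ] := by
  simp [simplexWord]

lemma mem_simplex_two' (q : ℕ) (β γ : ZMod q) : simplexWord q β [γ] ∈ simplex q 2 :=
  ⟨[γ], ⟨[], rfl, γ, (simplexWord_nil q γ).symm⟩, β, rfl⟩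


/-- For every unit `α` of `ZMod q` and every `c ∈ S_2(q)`, the codeword
`(c, α, c + α·𝟏, …, c + (q−1)α·𝟏)` of `S_3(q)` has Hamming weight
`1 + (q − 1)(q + 1) = q²`; consequently the number of codewords of `S_3(q)` arising
from pairs `(α, c)` with `α` a unit is exactly `φ(q)·q²`, each of weight `q²`. -/
theorem simplex_three_unit_weight (q : ℕ) (hq : 2 ≤ q) :
    (∀ α : ZMod q, IsUnit α → ∀ c ∈ simplex q 2,
      wt (simplexWord q α c) = 1 + (q - 1) * (q + 1)) ∧
    1 + (q - 1) * (q + 1) = q ^ 2 ∧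
    ({w | ∃ α : ZMod q, IsUnit α ∧ ∃ c ∈ simplex q 2, w = simplexWord q α c}).ncard
      = Nat.totient q * q ^ 2 := by
  haveI : NeZero q := ⟨by omega⟩
  haveI : Fact (1 < q) := ⟨by omega⟩
  refine ⟨?_, ?_, ?_⟩
  · intro α hα c hc
    obtain ⟨γ, β, rfl⟩ := mem_simplex_two q c hc
    set c := simplexWord q β [γ] with hcdef
    have hne : α ≠ 0 := hα.ne_zero
    have hkey := wt_key q hq α hα c
    have hlen : c.length = q + 1 := length_simplex_two q hq β γ
    show wt (c ++ α :: _) = _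
    rw [wt, List.countP_append, List.countP_cons, countP_flatMap_range]
    simp only [decide_eq_true_eq]
    rw [if_pos hne]
    have : (c.countP fun x => decide (x ≠ 0)) + (∑ i ∈ Finset.range (q - 1),
        ((c.map fun x => x + ((i + 1 : ℕ) : ZMod q) * α).countP fun x => decide (x ≠ 0)))
        = (q + 1) * (q - 1) := by
      rw [← hlen]; exact hkey
    rw [Nat.mul_comm] at this
    omega
  · obtain ⟨n, rfl⟩ : ∃ n, q = n + 2 := ⟨q - 2, by omega⟩
    show 1 + (n + 2 - 1) * (n + 2 + 1) = (n + 2) ^ 2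
    have h : n + 2 - 1 = n + 1 := by omega
    rw [h]; ring
  · have hset : {w | ∃ α : ZMod q, IsUnit α ∧ ∃ c ∈ simplex q 2, w = simplexWord q α c}
        = Set.range (fun p : (ZMod q)ˣ × ZMod q × ZMod q =>
            simplexWord q ↑p.1 (simplexWord q p.2.1 [p.2.2])) := by
      ext w
      constructor
      · rintro ⟨α, hα, c, hc, rfl⟩
        obtain ⟨u, rfl⟩ := hα
        obtain ⟨γ, β, rfl⟩ := mem_simplex_two q c hc
        exact ⟨(u, β, γ), rfl⟩
      · rintro ⟨⟨u, β, γ⟩, rfl⟩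
        exact ⟨↑u, u.isUnit, simplexWord q β [γ], mem_simplex_two' q β γ, rfl⟩
    have hinj : Function.Injective (fun p : (ZMod q)ˣ × ZMod q × ZMod q =>
        simplexWord q ↑p.1 (simplexWord q p.2.1 [p.2.2])) := by
      rintro ⟨u, β, γ⟩ ⟨u', β', γ'⟩ h
      simp only [simplexWord] at h
      have hlen : (simplexWord q β [γ]).length = (simplexWord q β' [γ']).length := by
        rw [length_simplex_two q hq, length_simplex_two q hq]
      simp only [simplexWord] at hlen
      obtain ⟨h1, h2⟩ := List.append_inj h hlen
      have h1' : simplexWord q β [γ] = simplexWord q β' [γ'] := h1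
      rw [simplexWord_inner, simplexWord_inner] at h1'
      injection h1' with hγ h1''
      injection h1'' with hβ _
      injection h2 with hu _
      have : u = u' := Units.ext hu
      subst this; subst hγ; subst hβ; rfl
    rw [hset, ← Set.image_univ, Set.ncard_image_of_injective _ hinj, Set.ncard_univ,
      Nat.card_prod, Nat.card_prod, Nat.card_eq_fintype_card, Nat.card_eq_fintype_card,
      ZMod.card_units_eq_totient, ZMod.card, ← pow_two]
end

section
/- Let q ≥ 2 be an integer and let α be a nonzero non-unit of Z_q of additive order d. Then for every c ∈ S_2(q), the codeword (c, α, c + α·𝟏, c + 2α·𝟏, …, c + (q−1)α·𝟏) of the Z_q-Simplex code S_3(q) has Hamming weight 1 + q(q + 1) − (q/d)·Σ_{i=0}^{d−1} n(iα), where n(x) denotes the number of coordinates of c equal to x. -/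
private lemma simplexWord_length (q : ℕ) (α : ZMod q) (c : List (ZMod q)) :
    (simplexWord q α c).length = c.length + 1 + (q - 1) * c.length := by
  simp [simplexWord, List.length_flatMap, Function.comp_def]
  ring

private lemma simplex_two_length {q : ℕ} (hq : 2 ≤ q) {c : List (ZMod q)}
    (hc : c ∈ simplex q 2) : c.length = q + 1 := by
  obtain ⟨c1, hc1, β, rfl⟩ := hc
  obtain ⟨c0, hc0, γ, rfl⟩ := hc1
  have h0 : c0 = [] := hc0
  subst h0
  rw [simplexWord_length, simplexWord_length]
  simp
  omega

private lemma countP_shift {q : ℕ} (β : ZMod q) (c : List (ZMod q)) :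
    c.countP (fun x => decide (x + β ≠ 0)) = c.length - c.count (-β) := by
  have h := List.length_eq_countP_add_countP (fun x => decide (x + β ≠ 0)) (l := c)
  have h2 : c.countP (fun a => decide ¬(decide (a + β ≠ 0) = true))
      = c.count (-β) := by
    rw [List.count_eq_countP]
    apply List.countP_congr
    intro a _
    simp only [decide_eq_true_eq, decide_not, Bool.not_eq_true', decide_eq_false_iff_not,
      not_not, beq_iff_eq]
    constructor
    · intro h'
      have : a + β = 0 := by by_contra hcon; simp [hcon] at h'
      simp [eq_neg_of_add_eq_zero_left this]
    · intro h'
      have : a = -β := by simpa using h'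
      simp [this]
  omega

private lemma sum_range_periodic (g : ℕ → ℕ) (d : ℕ) (hg : ∀ m, g (m + d) = g m) (k : ℕ) :
    ∑ m ∈ Finset.range (k * d), g m = k * ∑ j ∈ Finset.range d, g j := by
  induction k with
  | zero => simp
  | succ k ih =>
    have hgk : ∀ n m, g (m + n * d) = g m := by
      intro n
      induction n with
      | zero => simp
      | succ n ihn => intro m; rw [Nat.succ_mul, ← add_assoc, hg, ihn]
    rw [Nat.succ_mul, Finset.sum_range_add, ih, Nat.succ_mul]
    congr 1
    apply Finset.sum_congr rfl
    intro j _
    rw [add_comm (k * d) j, hgk]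

private lemma sum_range_neg {q : ℕ} (hq : 0 < q) (f : ZMod q → ℕ) :
    ∑ i ∈ Finset.range q, f (-(i : ZMod q)) = ∑ i ∈ Finset.range q, f (i : ZMod q) := by
  apply Finset.sum_nbij' (fun i => (q - i) % q) (fun i => (q - i) % q)
  · intro a _; exact Finset.mem_range.mpr (Nat.mod_lt _ hq)
  · intro a _; exact Finset.mem_range.mpr (Nat.mod_lt _ hq)
  · intro a ha
    simp only [Finset.mem_range] at ha
    rcases Nat.eq_zero_or_pos a with h0 | h0
    · subst h0; simp
    · have h1 : (q - a) % q = q - a := Nat.mod_eq_of_lt (by omega)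
      rw [h1]
      have : q - (q - a) = a := by omega
      rw [this, Nat.mod_eq_of_lt ha]
  · intro a ha
    simp only [Finset.mem_range] at ha
    rcases Nat.eq_zero_or_pos a with h0 | h0
    · subst h0; simp
    · have h1 : (q - a) % q = q - a := Nat.mod_eq_of_lt (by omega)
      rw [h1]
      have : q - (q - a) = a := by omega
      rw [this, Nat.mod_eq_of_lt ha]
  · intro a ha
    simp only [Finset.mem_range] at ha
    congr 1
    rw [ZMod.natCast_mod]
    push_cast [Nat.cast_sub (le_of_lt ha)]
    rw [ZMod.natCast_self]
    ring

/-- For a nonzero non-unit `α` of `ZMod q` of additive order `d` and every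
`c ∈ S_2(q)`, the codeword `(c, α, c + α·𝟏, …, c + (q−1)α·𝟏)` of `S_3(q)` has
Hamming weight `1 + q(q + 1) − (q/d)·Σ_{i=0}^{d−1} n(iα)`, where `n(x)` is the
number of coordinates of `c` equal to `x`. -/
theorem simplex_three_nonunit_weight (q : ℕ) (hq : 2 ≤ q)
    (α : ZMod q) (hα : α ≠ 0) (hnu : ¬IsUnit α) (d : ℕ) (hd : addOrderOf α = d)
    (c : List (ZMod q)) (hc : c ∈ simplex q 2) :
    wt (simplexWord q α c) =
      1 + q * (q + 1) - (q / d) * ∑ i ∈ Finset.range d, c.count ((i : ZMod q) * α) := by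
  have hq0 : 0 < q := by omega
  have hlen : c.length = q + 1 := simplex_two_length hq hc
  have hdvd : d ∣ q := by
    rw [← hd, addOrderOf_dvd_iff_nsmul_eq_zero, nsmul_eq_mul, ZMod.natCast_self, zero_mul]
  have hdα : (d : ZMod q) * α = 0 := by
    rw [← nsmul_eq_mul, ← hd, addOrderOf_nsmul_eq_zero]
  -- Step 1: compute wt as 1 + sum over range q
  have step1 : wt (simplexWord q α c) =
      1 + ∑ i ∈ Finset.range q, ((q + 1) - c.count (-((i : ZMod q) * α))) := by
    unfold wt simplexWord
    rw [List.countP_append, List.countP_cons, List.countP_flatMap]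
    have hαd : decide (α ≠ 0) = true := by simp [hα]
    rw [hαd]
    have hsum : (List.map ((List.countP fun x => decide (x ≠ 0)) ∘
        fun i => List.map (fun x => x + ((i + 1 : ℕ) : ZMod q) * α) c) (List.range (q - 1))).sum
        = ∑ i ∈ Finset.range (q - 1), ((q + 1) - c.count (-(((i + 1 : ℕ) : ZMod q) * α))) := by
      have : ((List.range (q-1)).map (fun i =>
          ((c.map (fun x => x + ((i + 1 : ℕ) : ZMod q) * α)).countP (fun x => decide (x ≠ 0))))).sum
          = ∑ i ∈ Finset.range (q - 1), ((q + 1) - c.count (-(((i + 1 : ℕ) : ZMod q) * α))) := by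
        have heq : ∀ i, ((c.map (fun x => x + ((i + 1 : ℕ) : ZMod q) * α)).countP
            (fun x => decide (x ≠ 0))) = (q + 1) - c.count (-(((i + 1 : ℕ) : ZMod q) * α)) := by
          intro i
          rw [List.countP_map]
          have := countP_shift (((i + 1 : ℕ) : ZMod q) * α) c
          rw [← hlen]
          convert this using 2
          rfl
        simp only [heq]
        rfl
      exact this
    rw [hsum]
    have hzero : List.countP (fun x => decide (x ≠ 0)) c = (q + 1) - c.count (-(((0 : ℕ) : ZMod q) * α)) := by
      have := countP_shift (0 : ZMod q) c
      simp only [add_zero] at this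
      rw [← hlen]
      simpa using this
    have hq1 : Finset.range q = Finset.range ((q - 1) + 1) := by
      congr 1; omega
    conv_rhs => rw [hq1]
    rw [Finset.sum_range_succ', hzero, if_pos rfl]
    omega
  rw [step1]
  -- Step 2: pull out subtraction
  have hle : ∀ i ∈ Finset.range q, c.count (-((i : ZMod q) * α)) ≤ q + 1 := by
    intro i _
    rw [← hlen]; exact List.count_le_length
  rw [Finset.sum_tsub_distrib _ hle, Finset.sum_const, Finset.card_range, smul_eq_mul]
  -- Step 3: reindex the negative sum
  have hneg : ∑ i ∈ Finset.range q, c.count (-((i : ZMod q) * α))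
      = ∑ i ∈ Finset.range q, c.count ((i : ZMod q) * α) := by
    have := sum_range_neg hq0 (fun x => c.count (x * α))
    simpa [neg_mul] using this
  rw [hneg]
  -- Step 4: periodicity
  have hper : ∑ i ∈ Finset.range q, c.count ((i : ZMod q) * α)
      = (q / d) * ∑ i ∈ Finset.range d, c.count ((i : ZMod q) * α) := by
    have hqd : Finset.range q = Finset.range ((q / d) * d) := by
      rw [Nat.div_mul_cancel hdvd]
    conv_lhs => rw [hqd]
    apply sum_range_periodic
    intro m
    congr 1
    push_cast
    rw [add_mul, hdα, add_zero]
  rw [hper]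
  have hS : (q / d) * ∑ i ∈ Finset.range d, c.count ((i : ZMod q) * α) ≤ q * (q + 1) := by
    calc (q / d) * ∑ i ∈ Finset.range d, c.count ((i : ZMod q) * α)
        ≤ (q / d) * ∑ i ∈ Finset.range d, (q + 1) := by
          apply Nat.mul_le_mul_left
          apply Finset.sum_le_sum
          intro i _
          rw [← hlen]; exact List.count_le_length
      _ = (q / d) * (d * (q + 1)) := by rw [Finset.sum_const, Finset.card_range, smul_eq_mul]
      _ ≤ q * (q + 1) := by
          rw [← mul_assoc]
          apply Nat.mul_le_mul_right
          exact Nat.div_mul_le_self q d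
  omega
end
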